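/- Saalschütz summation: for a nonnegative integer k and parameters a, b, c, d with c + d = -k + a + b + 1 (and c, d avoiding nonpositive integers making terms undefined), Σ_{i=0}^{k} ((-k)_i (a)_i (b)_i)/((c)_i (d)_i i!) = ((c-a)_k (d-a)_k)/((c)_k (d)_k). -/
import Mathlib

open scoped Nat
noncomputable section

open Finset Polynomial

namespace SaalAux

/-- Abbreviation for the evaluated ascending Pochhammer symbol. -/
def P (x : ℝ) (m : ℕ) : ℝ := (ascPochhammer ℝ m).eval x

lemma P_def (x : ℝ) (m : ℕ) : (ascPochhammer ℝ m).eval x = P x m := rfl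

lemma P_zero (x : ℝ) : P x 0 = 1 := by simp [P]

lemma P_one (x : ℝ) : P x 1 = x := by simp [P, ascPochhammer_one]

lemma P_succ (x : ℝ) (m : ℕ) : P x (m + 1) = P x m * (x + m) := by
  simpa [P] using ascPochhammer_succ_eval m x

lemma P_succ_left (x : ℝ) (m : ℕ) : P x (m + 1) = x * P (x + 1) m := by
  simp [P, ascPochhammer_succ_left, eval_comp]

lemma P_congr {x y : ℝ} (m : ℕ) (h : x = y) : P x m = P y m := by rw [h]

lemma P_add (x : ℝ) (m n : ℕ) : P x (m + n) = P x m * P (x + m) n := by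
  have := congrArg (Polynomial.eval x) (ascPochhammer_mul (S := ℝ) m n)
  simpa [P, eval_comp] using this.symm

/-- WZ-style certificate function. -/
def G (n : ℕ) (a b c d : ℝ) : ℕ → ℝ
  | 0 => 0
  | j + 1 => (-1 : ℝ) ^ j * (n.choose j) * P a (j + 1) * P b (j + 1) *
      P (c + j) (n - j) * P (d + 1 + j) (n - j)

lemma key : ∀ (n : ℕ) (a b c d : ℝ), c + d = a + b + 1 - n →
    ∑ i ∈ range (n + 1),
      (-1 : ℝ) ^ i * (n.choose i) * P a i * P b i * P (c + i) (n - i) * P (d + i) (n - i)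
      = P (c - a) n * P (d - a) n := by
  intro n
  induction n with
  | zero =>
    intro a b c d _
    simp [P_zero]
  | succ n ih =>
    intro a b c d h
    have hb : b = c + d + (n : ℝ) - a := by push_cast at h; linarith
    have hstep : ∀ i ∈ range (n + 2),
        (-1 : ℝ) ^ i * ((n + 1).choose i) * P a i * P b i *
            P (c + i) (n + 1 - i) * P (d + i) (n + 1 - i)
        = (c + n - a) * (d - a) *
            ((-1 : ℝ) ^ i * (n.choose i) * P a i * P b i *
              P (c + i) (n - i) * P (d + 1 + i) (n - i))
          + (G n a b c d (i + 1) - G n a b c d i) := by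
      intro i hi
      rw [mem_range, Nat.lt_succ_iff] at hi
      match i, hi with
      | 0, _ =>
        simp only [G, pow_zero, Nat.choose_zero_right, Nat.cast_zero, Nat.cast_one,
          add_zero, zero_add, Nat.sub_zero, P_zero, P_one, one_mul, mul_one, sub_zero]
        rw [P_succ c n, P_succ_left d n, hb]
        ring
      | (j + 1), hj =>
        have hj' : j ≤ n := by omega
        rcases eq_or_lt_of_le hj' with rfl | hjn
        · -- i = j + 1 = n + 1
          simp only [G, Nat.choose_self, Nat.choose_succ_self, Nat.cast_zero, Nat.cast_one,
            Nat.sub_self, Nat.succ_sub_one, P_zero,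
            show j + 1 - (j + 1) = 0 from by omega,
            show j - (j + 1) = 0 from by omega,
            show j - j = 0 from by omega]
          ring
        · obtain ⟨m, rfl⟩ : ∃ m, n = j + 1 + m := ⟨n - (j + 1), by omega⟩
          have e1 : j + 1 + m + 1 - (j + 1) = m + 1 := by omega
          have e2 : j + 1 + m - (j + 1) = m := by omega
          have e3 : j + 1 + m - j = m + 1 := by omega
          have hc1R : (((j + 1 + m + 1).choose (j + 1) : ℝ))
              = ((j + 1 + m).choose j : ℝ) + ((j + 1 + m).choose (j + 1) : ℝ) := by
            exact_mod_cast congrArg (Nat.cast : ℕ → ℝ) (Nat.choose_succ_succ (j + 1 + m) j)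
          have hch2 := Nat.choose_succ_right_eq (j + 1 + m) j
          rw [e3] at hch2
          have hx : (((j + 1 + m).choose j : ℝ))
              = ((j + 1 + m).choose (j + 1) : ℝ) * ((j : ℝ) + 1) / ((m : ℝ) + 1) := by
            have h2R : ((j + 1 + m).choose (j + 1) : ℝ) * ((j : ℝ) + 1)
                = ((j + 1 + m).choose j : ℝ) * ((m : ℝ) + 1) := by exact_mod_cast hch2
            field_simp
            linarith [h2R]
          simp only [G, e1, e2, e3]
          rw [P_succ (c + ((j : ℕ) + 1 : ℕ)) m, P_succ_left (d + ((j : ℕ) + 1 : ℕ)) m,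
            P_succ a (j + 1), P_succ b (j + 1),
            P_succ_left (c + (j : ℝ)) m, P_succ_left (d + 1 + (j : ℝ)) m,
            P_congr m (show d + ((j + 1 : ℕ) : ℝ) + 1 = d + 1 + ((j + 1 : ℕ) : ℝ) by push_cast; ring),
            P_congr m (show c + (j : ℝ) + 1 = c + ((j + 1 : ℕ) : ℝ) by push_cast; ring),
            P_congr m (show d + 1 + (j : ℝ) + 1 = d + 1 + ((j + 1 : ℕ) : ℝ) by push_cast; ring),
            hb, hc1R, hx]
          push_cast
          field_simp
          ring
    calc ∑ i ∈ range (n + 1 + 1),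
          (-1 : ℝ) ^ i * ((n + 1).choose i) * P a i * P b i *
            P (c + i) (n + 1 - i) * P (d + i) (n + 1 - i)
        = ∑ i ∈ range (n + 2),
            ((c + n - a) * (d - a) *
              ((-1 : ℝ) ^ i * (n.choose i) * P a i * P b i *
                P (c + i) (n - i) * P (d + 1 + i) (n - i))
            + (G n a b c d (i + 1) - G n a b c d i)) := Finset.sum_congr rfl hstep
      _ = (c + n - a) * (d - a) *
            ∑ i ∈ range (n + 2),
              (-1 : ℝ) ^ i * (n.choose i) * P a i * P b i *
                P (c + i) (n - i) * P (d + 1 + i) (n - i)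
          + (G n a b c d (n + 2) - G n a b c d 0) := by
          rw [Finset.sum_add_distrib, ← Finset.mul_sum, Finset.sum_range_sub]
      _ = (c + n - a) * (d - a) *
            ∑ i ∈ range (n + 1),
              (-1 : ℝ) ^ i * (n.choose i) * P a i * P b i *
                P (c + i) (n - i) * P (d + 1 + i) (n - i) := by
          rw [Finset.sum_range_succ]
          simp [G, Nat.choose_succ_self]
      _ = (c + n - a) * (d - a) * (P (c - a) n * P (d + 1 - a) n) := by
          rw [ih a b c (d + 1) (by push_cast at h ⊢; linarith)]
      _ = P (c - a) (n + 1) * P (d - a) (n + 1) := by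
          rw [P_succ (c - a) n, P_succ_left (d - a) n,
            P_congr n (show d - a + 1 = d + 1 - a by ring)]
          ring

end SaalAux

open SaalAux in
/-- Saalschütz summation: for a nonnegative integer `k` and parameters `a, b, c, d` with
`c + d = -k + a + b + 1` (the Saalschützian condition), and `c`, `d` such that no Pochhammer
denominator vanishes,
`Σ_{i=0}^k ((-k)_i (a)_i (b)_i)/((c)_i (d)_i i!) = ((c-a)_k (d-a)_k)/((c)_k (d)_k)`. -/
theorem stmt13 (k : ℕ) (a b c d : ℝ)
    (hS : c + d = -(k : ℝ) + a + b + 1)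
    (hc : ∀ i : ℕ, i ≤ k → (ascPochhammer ℝ i).eval c ≠ 0)
    (hd : ∀ i : ℕ, i ≤ k → (ascPochhammer ℝ i).eval d ≠ 0) :
    ∑ i ∈ Finset.range (k + 1),
        ((ascPochhammer ℝ i).eval (-(k : ℝ)) * (ascPochhammer ℝ i).eval a *
            (ascPochhammer ℝ i).eval b) /
          ((ascPochhammer ℝ i).eval c * (ascPochhammer ℝ i).eval d * (i ! : ℝ))
      = ((ascPochhammer ℝ k).eval (c - a) * (ascPochhammer ℝ k).eval (d - a)) /
          ((ascPochhammer ℝ k).eval c * (ascPochhammer ℝ k).eval d) := by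
  simp only [P_def]
  have hcd : c + d = a + b + 1 - (k : ℝ) := by linarith
  have hPc : P c k ≠ 0 := hc k le_rfl
  have hPd : P d k ≠ 0 := hd k le_rfl
  have hterm : ∀ i ∈ Finset.range (k + 1),
      P (-(k : ℝ)) i * P a i * P b i / (P c i * P d i * (i ! : ℝ))
      = ((-1 : ℝ) ^ i * (k.choose i) * P a i * P b i * P (c + i) (k - i) * P (d + i) (k - i))
          / (P c k * P d k) := by
    intro i hi
    rw [Finset.mem_range, Nat.lt_succ_iff] at hi
    have h1 : P c i ≠ 0 := hc i hi
    have h2 : P d i ≠ 0 := hd i hi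
    have h3 : (i ! : ℝ) ≠ 0 := Nat.cast_ne_zero.mpr i.factorial_ne_zero
    have hneg : P (-(k : ℝ)) i = (-1 : ℝ) ^ i * (k.descFactorial i : ℝ) := by
      show (ascPochhammer ℝ i).eval (-(k : ℝ)) = _
      rw [ascPochhammer_eval_neg_eq_descPochhammer,
        descPochhammer_eval_eq_descFactorial]
    have hsplit_c : P c k = P c i * P (c + i) (k - i) := by
      have := P_add c i (k - i)
      rwa [Nat.add_sub_cancel' hi] at this
    have hsplit_d : P d k = P d i * P (d + i) (k - i) := by
      have := P_add d i (k - i)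
      rwa [Nat.add_sub_cancel' hi] at this
    have hdf : (k.descFactorial i : ℝ) = (i ! : ℝ) * (k.choose i : ℝ) := by
      exact_mod_cast congrArg (Nat.cast : ℕ → ℝ)
        (Nat.descFactorial_eq_factorial_mul_choose k i)
    rw [hneg, hdf, div_eq_div_iff (mul_ne_zero (mul_ne_zero h1 h2) h3)
      (mul_ne_zero hPc hPd), hsplit_c, hsplit_d]
    ring
  rw [Finset.sum_congr rfl hterm, ← Finset.sum_div, key k a b c d hcd]
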